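/- Let g₁, g₂ be positive integers with g₂/2 < g₁ < g₂ and let S be a numerical semigroup. Then E(S) = {g₁, g₂} if and only if: S is a maximal element (under inclusion) of the set 𝓘∩(g₁,g₂) = {S₁ ∩ S₂ : S₁ irreducible with Frobenius number g₁, S₂ irreducible with Frobenius number g₂, g₁ ∈ S₂}, and moreover g₁ belongs to every irreducible numerical semigroup with Frobenius number g₂ that contains S. -/

import Mathlib

/-- A numerical semigroup: subset of ℕ closed under addition, containing 0, cofinite. -/
def IsNumericalSemigroup (S : Set ℕ) : Prop :=
  0 ∈ S ∧ (∀ a b, a ∈ S → b ∈ S → a + b ∈ S) ∧ Sᶜ.Finite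

/-- The set of special gaps E(S). -/
def specialGaps (S : Set ℕ) : Set ℕ :=
  {x | x ∉ S ∧ 2 * x ∈ S ∧ ∀ s ∈ S, s ≠ 0 → x + s ∈ S}

/-- `F` is the Frobenius number of `S`: the greatest natural number not in `S`. -/
def IsFrobenius (S : Set ℕ) (F : ℕ) : Prop :=
  F ∉ S ∧ ∀ m : ℕ, m ∉ S → m ≤ F

/-- Irreducible numerical semigroup. -/
def IsIrreducibleNS (S : Set ℕ) : Prop :=
  IsNumericalSemigroup S ∧ ∀ S₁ S₂ : Set ℕ, IsNumericalSemigroup S₁ →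
    IsNumericalSemigroup S₂ → S = S₁ ∩ S₂ → S = S₁ ∨ S = S₂

/-- Atomic numerical semigroup. -/
def IsAtomicNS (S : Set ℕ) : Prop :=
  IsNumericalSemigroup S ∧ ∀ (F : ℕ) (S₁ S₂ : Set ℕ), IsFrobenius S F →
    IsNumericalSemigroup S₁ → IsNumericalSemigroup S₂ →
    IsFrobenius S₁ F → IsFrobenius S₂ F → S = S₁ ∩ S₂ → S = S₁ ∨ S = S₂

/-- Pseudo-Frobenius numbers of `S`, as integers. -/
def pseudoFrob (S : Set ℕ) : Set ℤ :=
  {x | x ∉ (fun n : ℕ => (n : ℤ)) '' S ∧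
    ∀ s ∈ S, s ≠ 0 → x + (s : ℤ) ∈ (fun n : ℕ => (n : ℤ)) '' S}

/-- The semigroup C(F): 0 together with all naturals greater than F/2, except F. -/
def NSC (F : ℕ) : Set ℕ := insert 0 ({n : ℕ | F / 2 < n} \ {F})

/-- `x` is a minimal generator of `S`. -/
def IsMinGen (S : Set ℕ) (x : ℕ) : Prop :=
  x ∈ S ∧ x ≠ 0 ∧ ∀ a b, a ∈ S → b ∈ S → a ≠ 0 → b ≠ 0 → a + b ≠ x

lemma insertNS {S : Set ℕ} (hS : IsNumericalSemigroup S) {x : ℕ}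
    (hx : x ∈ specialGaps S) : IsNumericalSemigroup (insert x S) := by
  obtain ⟨hxS, h2x, hadd⟩ := hx
  refine ⟨Or.inr hS.1, ?_, hS.2.2.subset (fun n hn h => hn (Or.inr h))⟩
  intro a b ha hb
  rcases Set.mem_insert_iff.mp ha with h1 | h1
  · rcases Set.mem_insert_iff.mp hb with h2 | h2
    · exact Or.inr (by rw [h1, h2, ← two_mul]; exact h2x)
    · rcases eq_or_ne b 0 with hb0 | hb0
      · exact Or.inl (by rw [h1, hb0, add_zero])
      · exact Or.inr (by rw [h1]; exact hadd b h2 hb0)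
  · rcases Set.mem_insert_iff.mp hb with h2 | h2
    · rcases eq_or_ne a 0 with ha0 | ha0
      · exact Or.inl (by rw [h2, ha0, zero_add])
      · exact Or.inr (by rw [h2, add_comm]; exact hadd a h1 ha0)
    · exact Or.inr (hS.2.1 a b h1 h2)

lemma interNS {A B : Set ℕ} (hA : IsNumericalSemigroup A) (hB : IsNumericalSemigroup B) :
    IsNumericalSemigroup (A ∩ B) := by
  refine ⟨⟨hA.1, hB.1⟩, ?_, ?_⟩
  · exact fun a b ha hb => ⟨hA.2.1 a b ha.1 hb.1, hB.2.1 a b ha.2 hb.2⟩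
  · rw [Set.compl_inter]; exact hA.2.2.union hB.2.2

lemma maxgap {S T : Set ℕ} (hS : IsNumericalSemigroup S) (hT : IsNumericalSemigroup T)
    (hsub : S ⊆ T) (hne : (T \ S).Nonempty) :
    ∃ m, m ∈ T ∧ m ∉ S ∧ m ∈ specialGaps S := by
  have hfin : (T \ S).Finite := hS.2.2.subset (fun n hn => hn.2)
  obtain ⟨m, hmmem, hmax⟩ := Set.Finite.exists_maximalFor id _ hfin hne
  have hle : ∀ a ∈ T \ S, a ≤ m := by
    intro a ha
    by_contra h
    have := hmax (j := a) ha (by simp; omega)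
    simp at this; omega
  have hmT : m ∈ T := hmmem.1
  have hmS : m ∉ S := hmmem.2
  have hm0 : m ≠ 0 := fun h => hmS (h ▸ hS.1)
  refine ⟨m, hmT, hmS, hmS, ?_, ?_⟩
  · by_contra h
    have h2 : m + m ∈ T := hT.2.1 m m hmT hmT
    have : m + m ≤ m := hle _ ⟨h2, by rw [two_mul] at h; exact h⟩
    omega
  · intro s hs hs0
    by_contra h
    have : m + s ≤ m := hle _ ⟨hT.2.1 m s hmT (hsub hs), h⟩
    omega

lemma maximal_ext (g : ℕ) :
    ∀ n, ∀ S : Set ℕ, IsNumericalSemigroup S → g ∉ S → Sᶜ.ncard = n →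
    ∃ M, IsNumericalSemigroup M ∧ S ⊆ M ∧ g ∉ M ∧
      ∀ M', IsNumericalSemigroup M' → M ⊆ M' → g ∉ M' → M = M' := by
  intro n
  induction n using Nat.strong_induction_on with
  | _ n ih =>
    intro S hS hg hcard
    by_cases hmax : ∀ M', IsNumericalSemigroup M' → S ⊆ M' → g ∉ M' → S = M'
    · exact ⟨S, hS, subset_rfl, hg, hmax⟩
    · push_neg at hmax
      obtain ⟨T, hT, hsub, hgT, hne⟩ := hmax
      have hss : Tᶜ ⊂ Sᶜ := by
        refine ⟨Set.compl_subset_compl.mpr hsub, fun h => ?_⟩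
        exact hne (Set.Subset.antisymm hsub (Set.compl_subset_compl.mp h))
      have hlt : Tᶜ.ncard < n := hcard ▸ Set.ncard_lt_ncard hss hS.2.2
      obtain ⟨M, hM, hsub', hgM, hmax'⟩ := ih _ hlt T hT hgT rfl
      exact ⟨M, hM, hsub.trans hsub', hgM, hmax'⟩

lemma sg_eq_of_maximal {M : Set ℕ} {g : ℕ} (hM : IsNumericalSemigroup M) (hg : g ∉ M)
    (hmax : ∀ M', IsNumericalSemigroup M' → M ⊆ M' → g ∉ M' → M = M') :
    ∀ a ∈ specialGaps M, a = g := by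
  intro a ha
  by_contra hne
  have heq := hmax (insert a M) (insertNS hM ha) (Set.subset_insert _ _)
    (by simp [Set.mem_insert_iff, hg]; omega)
  exact ha.1 (by rw [heq]; exact Set.mem_insert _ _)

lemma frob_of_maximal {M : Set ℕ} {g : ℕ} (hM : IsNumericalSemigroup M) (hg : g ∉ M)
    (hmax : ∀ M', IsNumericalSemigroup M' → M ⊆ M' → g ∉ M' → M = M') :
    IsFrobenius M g := by
  refine ⟨hg, ?_⟩
  intro m hm
  by_contra hlt
  push_neg at hlt
  obtain ⟨y, hy, hymax⟩ := Set.Finite.exists_maximalFor id _ hM.2.2 ⟨m, hm⟩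
  have hyle : ∀ a ∉ M, a ≤ y := by
    intro a ha
    by_contra h
    have := hymax (j := a) ha (by simp; omega)
    simp at this; omega
  have hy0 : y ≠ 0 := fun h => hy (h ▸ hM.1)
  have hyE : y ∈ specialGaps M := by
    refine ⟨hy, ?_, ?_⟩
    · by_contra h; have := hyle _ h; omega
    · intro s hs hs0; by_contra h; have := hyle _ h; omega
  have := sg_eq_of_maximal hM hg hmax y hyE
  have := hyle m hm
  omega

lemma irr_of_maximal {M : Set ℕ} {g : ℕ} (hM : IsNumericalSemigroup M) (hg : g ∉ M)
    (hmax : ∀ M', IsNumericalSemigroup M' → M ⊆ M' → g ∉ M' → M = M') :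
    IsIrreducibleNS M := by
  refine ⟨hM, ?_⟩
  intro A B hA hB hMAB
  by_contra h
  push_neg at h
  obtain ⟨hMA, hMB⟩ := h
  have hsubA : M ⊆ A := hMAB ▸ Set.inter_subset_left
  have hsubB : M ⊆ B := hMAB ▸ Set.inter_subset_right
  have hgA : g ∈ A := by
    have hne : (A \ M).Nonempty := by
      obtain ⟨x, hx1, hx2⟩ := Set.exists_of_ssubset ⟨hsubA, fun h => hMA (Set.Subset.antisymm hsubA h)⟩
      exact ⟨x, hx1, hx2⟩
    obtain ⟨a, haA, haM, haE⟩ := maxgap hM hA hsubA hne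
    exact (sg_eq_of_maximal hM hg hmax a haE) ▸ haA
  have hgB : g ∈ B := by
    have hne : (B \ M).Nonempty := by
      obtain ⟨x, hx1, hx2⟩ := Set.exists_of_ssubset ⟨hsubB, fun h => hMB (Set.Subset.antisymm hsubB h)⟩
      exact ⟨x, hx1, hx2⟩
    obtain ⟨b, hbB, hbM, hbE⟩ := maxgap hM hB hsubB hne
    exact (sg_eq_of_maximal hM hg hmax b hbE) ▸ hbB
  exact hg (hMAB ▸ Set.mem_inter hgA hgB)

lemma frob_mem_sg {S : Set ℕ} {F : ℕ} (hS : IsNumericalSemigroup S)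
    (hF : IsFrobenius S F) : F ∈ specialGaps S := by
  have hF0 : F ≠ 0 := fun h => hF.1 (h ▸ hS.1)
  have hgt : ∀ m, F < m → m ∈ S := fun m hm => by
    by_contra h; have := hF.2 m h; omega
  exact ⟨hF.1, hgt _ (by omega), fun s hs hs0 => hgt _ (by omega)⟩

lemma sg_of_irr {S : Set ℕ} {F : ℕ} (hS : IsNumericalSemigroup S)
    (hIrr : IsIrreducibleNS S) (hF : IsFrobenius S F) :
    ∀ x ∈ specialGaps S, x = F := by
  intro x hx
  by_contra hne
  have hFE : F ∈ specialGaps S := frob_mem_sg hS hF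
  have heq : S = insert x S ∩ insert F S := by
    ext n
    simp only [Set.mem_inter_iff, Set.mem_insert_iff]
    constructor
    · exact fun h => ⟨Or.inr h, Or.inr h⟩
    · rintro ⟨rfl | h, h2⟩
      · rcases h2 with h2 | h2
        · exact absurd h2 hne
        · exact h2
      · exact h
  rcases hIrr.2 _ _ (insertNS hS hx) (insertNS hS hFE) heq with h | h
  · exact hx.1 (by rw [h]; exact Set.mem_insert _ _)
  · exact hF.1 (by rw [h]; exact Set.mem_insert _ _)

theorem stmt15 (g₁ g₂ : ℕ) (h0 : 0 < g₁) (h1 : g₂ < 2 * g₁) (h2 : g₁ < g₂)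
    (S : Set ℕ) (hS : IsNumericalSemigroup S) :
    specialGaps S = {g₁, g₂} ↔
    ((∃ S₁ S₂ : Set ℕ, IsIrreducibleNS S₁ ∧ IsFrobenius S₁ g₁ ∧
        IsIrreducibleNS S₂ ∧ IsFrobenius S₂ g₂ ∧ g₁ ∈ S₂ ∧ S = S₁ ∩ S₂) ∧
      (∀ T : Set ℕ, (∃ T₁ T₂ : Set ℕ, IsIrreducibleNS T₁ ∧ IsFrobenius T₁ g₁ ∧
        IsIrreducibleNS T₂ ∧ IsFrobenius T₂ g₂ ∧ g₁ ∈ T₂ ∧ T = T₁ ∩ T₂) →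
        S ⊆ T → S = T) ∧
      (∀ S₂ : Set ℕ, IsIrreducibleNS S₂ → IsFrobenius S₂ g₂ → S ⊆ S₂ → g₁ ∈ S₂)) := by
  have hne12 : g₁ ≠ g₂ := by omega
  constructor
  · intro hE
    have hg1E : g₁ ∈ specialGaps S := by rw [hE]; exact Set.mem_insert _ _
    have hg2E : g₂ ∈ specialGaps S := by rw [hE]; exact Set.mem_insert_of_mem _ rfl
    have hg1S : g₁ ∉ S := hg1E.1
    have hg2S : g₂ ∉ S := hg2E.1
    -- maximality lemma: any NS T with S ⊆ T, g₁ ∉ T₁-side...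
    refine ⟨?_, ?_, ?_⟩
    · -- existence of the decomposition
      obtain ⟨S₁, hS₁, hsub₁, hg₁S₁, hmax₁⟩ :=
        maximal_ext g₁ (Sᶜ.ncard) S hS hg1S rfl
      have hins : IsNumericalSemigroup (insert g₁ S) := insertNS hS hg1E
      have hg2ins : g₂ ∉ insert g₁ S := by
        simp only [Set.mem_insert_iff]
        push_neg
        exact ⟨hne12.symm, hg2S⟩
      obtain ⟨S₂, hS₂, hsub₂, hg₂S₂, hmax₂⟩ :=
        maximal_ext g₂ ((insert g₁ S)ᶜ.ncard) (insert g₁ S) hins hg2ins rfl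
      refine ⟨S₁, S₂, irr_of_maximal hS₁ hg₁S₁ hmax₁, frob_of_maximal hS₁ hg₁S₁ hmax₁,
        irr_of_maximal hS₂ hg₂S₂ hmax₂, frob_of_maximal hS₂ hg₂S₂ hmax₂,
        hsub₂ (Set.mem_insert _ _), ?_⟩
      have hsubS₂ : S ⊆ S₂ := (Set.subset_insert _ _).trans hsub₂
      apply Set.Subset.antisymm (Set.subset_inter hsub₁ hsubS₂)
      intro x hx
      by_contra hxS
      obtain ⟨m, hmT, hmS, hmE⟩ := maxgap hS (interNS hS₁ hS₂)
        (Set.subset_inter hsub₁ hsubS₂) ⟨x, hx, hxS⟩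
      rw [hE] at hmE
      rcases hmE with rfl | rfl
      · exact hg₁S₁ hmT.1
      · exact hg₂S₂ hmT.2
    · -- maximality
      rintro T ⟨T₁, T₂, hT₁, hFT₁, hT₂, hFT₂, hg₁T₂, rfl⟩ hsub
      by_contra hne
      have hex : ((T₁ ∩ T₂) \ S).Nonempty := by
        obtain ⟨x, hx1, hx2⟩ := Set.exists_of_ssubset ⟨hsub, fun h => hne (Set.Subset.antisymm hsub h)⟩
        exact ⟨x, hx1, hx2⟩
      obtain ⟨m, hmT, hmS, hmE⟩ := maxgap hS (interNS hT₁.1 hT₂.1) hsub hex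
      rw [hE] at hmE
      rcases hmE with rfl | rfl
      · exact hFT₁.1 hmT.1
      · exact hFT₂.1 hmT.2
    · -- g₁ belongs to every irreducible with Frobenius g₂ containing S
      intro S₂ hIrr hF hsub
      by_contra hg1
      by_cases heq : S = S₂
      · subst heq
        exact hne12 (sg_of_irr hS hIrr hF g₁ hg1E)
      · have hex : (S₂ \ S).Nonempty := by
          obtain ⟨x, hx1, hx2⟩ := Set.exists_of_ssubset ⟨hsub, fun h => heq (Set.Subset.antisymm hsub h)⟩
          exact ⟨x, hx1, hx2⟩
        obtain ⟨m, hmT, hmS, hmE⟩ := maxgap hS hIrr.1 hsub hex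
        rw [hE] at hmE
        rcases hmE with rfl | rfl
        · exact hg1 hmT
        · exact hF.1 hmT
  · rintro ⟨⟨S₁, S₂, hIrr₁, hF₁, hIrr₂, hF₂, hg₁S₂, rfl⟩, hmaxT, hthird⟩
    have hg1S : g₁ ∉ S₁ ∩ S₂ := fun h => hF₁.1 h.1
    have hg2S : g₂ ∉ S₁ ∩ S₂ := fun h => hF₂.1 h.2
    have hSin : IsNumericalSemigroup (S₁ ∩ S₂) := interNS hIrr₁.1 hIrr₂.1
    have hbig : ∀ n, g₂ < n → n ∈ S₁ ∩ S₂ := by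
      intro n hn
      constructor
      · by_contra h; have := hF₁.2 n h; omega
      · by_contra h; have := hF₂.2 n h; omega
    apply Set.Subset.antisymm
    · -- specialGaps ⊆ {g₁, g₂}
      intro x hx
      simp only [Set.mem_insert_iff, Set.mem_singleton_iff]
      by_contra hxor
      push_neg at hxor
      obtain ⟨hx1, hx2⟩ := hxor
      have hxS : x ∉ S₁ ∩ S₂ := hx.1
      have hT : IsNumericalSemigroup (insert x (S₁ ∩ S₂)) := insertNS hSin hx
      have hg1T : g₁ ∉ insert x (S₁ ∩ S₂) := by
        simp only [Set.mem_insert_iff]; push_neg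
        exact ⟨fun h => hx1 h.symm, hg1S⟩
      have hg2T : g₂ ∉ insert x (S₁ ∩ S₂) := by
        simp only [Set.mem_insert_iff]; push_neg
        exact ⟨fun h => hx2 h.symm, hg2S⟩
      obtain ⟨T₁, hT₁, hsub₁, hg₁T₁, hmax₁⟩ :=
        maximal_ext g₁ ((insert x (S₁ ∩ S₂))ᶜ.ncard) _ hT hg1T rfl
      obtain ⟨T₂, hT₂, hsub₂, hg₂T₂, hmax₂⟩ :=
        maximal_ext g₂ ((insert x (S₁ ∩ S₂))ᶜ.ncard) _ hT hg2T rfl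
      have hsubT₁ : S₁ ∩ S₂ ⊆ T₁ := (Set.subset_insert _ _).trans hsub₁
      have hsubT₂ : S₁ ∩ S₂ ⊆ T₂ := (Set.subset_insert _ _).trans hsub₂
      have hg₁T₂mem : g₁ ∈ T₂ :=
        hthird T₂ (irr_of_maximal hT₂ hg₂T₂ hmax₂) (frob_of_maximal hT₂ hg₂T₂ hmax₂) hsubT₂
      have heq := hmaxT (T₁ ∩ T₂)
        ⟨T₁, T₂, irr_of_maximal hT₁ hg₁T₁ hmax₁, frob_of_maximal hT₁ hg₁T₁ hmax₁,
          irr_of_maximal hT₂ hg₂T₂ hmax₂, frob_of_maximal hT₂ hg₂T₂ hmax₂, hg₁T₂mem, rfl⟩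
        (Set.subset_inter hsubT₁ hsubT₂)
      have hxmem : x ∈ T₁ ∩ T₂ :=
        ⟨hsub₁ (Set.mem_insert _ _), hsub₂ (Set.mem_insert _ _)⟩
      rw [← heq] at hxmem
      exact hxS hxmem
    · -- {g₁, g₂} ⊆ specialGaps
      intro x hx
      rcases hx with rfl | hx
      · refine ⟨hg1S, hbig _ (by omega), ?_⟩
        intro s hs hs0
        constructor
        · by_contra h
          have := hF₁.2 _ h
          omega
        · exact hIrr₂.1.2.1 x s hg₁S₂ hs.2
      · rw [Set.mem_singleton_iff] at hx
        subst hx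
        refine ⟨hg2S, hbig _ (by omega), fun s hs hs0 => hbig _ (by omega)⟩
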